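/- Fix d ≥ 2 and let B ⊆ R^d be a compact convex set with 0 in its interior. There exists a constant C > 0 (depending only on d and B) such that for each s > 1, there is a set of at most C s^{d−1} unit vectors v_1, …, v_r in R^d such that every cube y + [0,1)^d with y ∈ Z^d that is completely contained in sB is intersected by at least one of the rays S_{v_i} = {t v_i : t ≥ 0}. -/

import Mathlib

open MeasureTheory ProbabilityTheory Filter Set
open scoped ENNReal NNReal

namespace FPPBoundary

/-- Vertices of `ℤ^d`. -/
abbrev V (d : ℕ) := Fin d → ℤ

/-- Nearest-neighbor adjacency in `ℤ^d`. -/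
def adj {d : ℕ} (x y : V d) : Prop := (∑ i, |x i - y i|) = 1

/-- `e` is a nearest-neighbor edge of `ℤ^d`. -/
def IsEdge {d : ℕ} (e : Sym2 (V d)) : Prop := ∃ x y : V d, adj x y ∧ e = s(x, y)

/-- The set of nearest-neighbor edges, as a type. -/
abbrev Edge (d : ℕ) := {e : Sym2 (V d) // IsEdge e}

/-- `γ : Fin (n+1) → V d` is a lattice path from `x` to `y`. -/
def IsPathFrom {d : ℕ} (n : ℕ) (γ : Fin (n + 1) → V d) (x y : V d) : Prop :=
  γ 0 = x ∧ γ (Fin.last n) = y ∧ ∀ i : Fin n, adj (γ i.castSucc) (γ i.succ)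

/-- The passage time of a lattice path. -/
noncomputable def pathCost {d : ℕ} (wgt : Sym2 (V d) → ℝ) (n : ℕ)
    (γ : Fin (n + 1) → V d) : ℝ :=
  ∑ i : Fin n, wgt s(γ i.castSucc, γ i.succ)

/-- The first-passage time `T(x,y)`. -/
noncomputable def T {d : ℕ} (wgt : Sym2 (V d) → ℝ) (x y : V d) : ℝ :=
  sInf {c : ℝ | ∃ n γ, IsPathFrom n γ x y ∧ c = pathCost wgt n γ}

/-- The lattice point `[x]` with `x ∈ [x] + [0,1)^d`. -/
noncomputable def latt {d : ℕ} (x : Fin d → ℝ) : V d := fun i => ⌊x i⌋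

/-- The extension of `T` to `ℝ^d × ℝ^d`. -/
noncomputable def Treal {d : ℕ} (wgt : Sym2 (V d) → ℝ) (x y : Fin d → ℝ) : ℝ :=
  T wgt (latt x) (latt y)

/-- The ball `B(t)`. -/
noncomputable def ball {d : ℕ} (wgt : Sym2 (V d) → ℝ) (t : ℝ) : Set (V d) :=
  {x | T wgt 0 x ≤ t}

/-- The edge boundary `∂ₑ A`. -/
def edgeBoundary {d : ℕ} (A : Set (V d)) : Set (Sym2 (V d)) :=
  {e | ∃ x y : V d, adj x y ∧ x ∈ A ∧ y ∉ A ∧ e = s(x, y)}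

/-- The vertex exterior boundary `∂^ext A`. -/
def extVertexBoundary {d : ℕ} (A : Set (V d)) : Set (V d) :=
  {x | x ∉ A ∧ (∃ y ∈ A, adj x y) ∧
    ∃ γ : ℕ → V d, γ 0 = x ∧ Function.Injective γ ∧
      (∀ n, adj (γ n) (γ (n + 1))) ∧ ∀ n, γ n ∉ A}

/-- The edge exterior boundary `∂ₑ^ext A`. -/
def extEdgeBoundary {d : ℕ} (A : Set (V d)) : Set (Sym2 (V d)) :=
  {e | ∃ x y : V d, adj x y ∧ y ∈ A ∧ x ∈ extVertexBoundary A ∧ e = s(x, y)}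

/-- `x` and `y` are joined by a lattice path all of whose edges lie in `O`. -/
def ConnectedIn {d : ℕ} (O : Set (Sym2 (V d))) (x y : V d) : Prop :=
  ∃ n γ, IsPathFrom n γ x y ∧ ∀ i : Fin n, s(γ (Fin.castSucc i), γ i.succ) ∈ O

/-- The open cluster of `x` for the set `O` of open edges. -/
def cluster {d : ℕ} (O : Set (Sym2 (V d))) (x : V d) : Set (V d) := {y | ConnectedIn O x y}

/-- `c` is an i.i.d. Bernoulli(p) bond configuration under `P`. -/
def IsBernoulliPerc {d : ℕ} {Ω : Type} [MeasurableSpace Ω] (P : Measure Ω) (p : ℝ)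
    (c : Ω → Sym2 (V d) → Bool) : Prop :=
  (∀ e : Edge d, Measurable fun ω => c ω e.1) ∧
  iIndepFun (fun (e : Edge d) ω => c ω e.1) P ∧
  ∀ e : Edge d, P {ω | c ω e.1 = true} = ENNReal.ofReal p

/-- The critical probability of Bernoulli bond percolation on `ℤ^d`. -/
noncomputable def pc (d : ℕ) : ℝ :=
  sSup {p : ℝ | 0 ≤ p ∧ p ≤ 1 ∧
    ∀ (Ω : Type) (_ : MeasurableSpace Ω) (P : Measure Ω), IsProbabilityMeasure P →
      ∀ c : Ω → Sym2 (V d) → Bool, IsBernoulliPerc P p c →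
        P {ω | (cluster {e | c ω e = true} 0).Infinite} = 0}

/-- `w` is an i.i.d. family of nonnegative edge-weights with marginal distribution `μ`. -/
def IsIIDWeights {d : ℕ} {Ω : Type} [MeasurableSpace Ω] (P : Measure Ω) (μ : Measure ℝ)
    (w : Ω → Sym2 (V d) → ℝ) : Prop :=
  (∀ e : Edge d, Measurable fun ω => w ω e.1) ∧
  iIndepFun (fun (e : Edge d) ω => w ω e.1) P ∧
  (∀ e : Edge d, Measure.map (fun ω => w ω e.1) P = μ) ∧
  ∀ (ω) (e : Edge d), 0 ≤ w ω e.1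

/-- `Y`: the minimum of the weights of the `2d` edges incident to the origin. -/
noncomputable def Ymin {d : ℕ} (wgt : Sym2 (V d) → ℝ) : ℝ :=
  ⨅ z : {z : V d // adj 0 z}, wgt s(0, z.1)

/-- `E[Y ∧ s]`. -/
noncomputable def EYmin {d : ℕ} {Ω : Type} [MeasurableSpace Ω] (P : Measure Ω)
    (w : Ω → Sym2 (V d) → ℝ) (s : ℝ) : ℝ :=
  ∫ ω, min (Ymin (w ω)) s ∂P

/-- the distribution function `F_Y` of `Y`. -/
noncomputable def FY {d : ℕ} {Ω : Type} [MeasurableSpace Ω] (P : Measure Ω)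
    (w : Ω → Sym2 (V d) → ℝ) (s : ℝ) : ℝ :=
  (P {ω | Ymin (w ω) ≤ s}).toReal

/-- the first coordinate vector. -/
def e1 (d : ℕ) : V d := fun j => if (j : ℕ) = 0 then 1 else 0

/-- `ℓ^∞` norm of a lattice point, as a real number. -/
def linf {d : ℕ} (x : V d) : ℝ := ((Finset.univ.sup fun i => (x i).natAbs : ℕ) : ℝ)

/-- `ℓ^2` norm on `ℝ^d`. -/
noncomputable def l2 {d : ℕ} (x : Fin d → ℝ) : ℝ := Real.sqrt (∑ i, x i ^ 2)

end FPPBoundary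
namespace FPPBoundary

open scoped Pointwise

lemma l2_eq {d : ℕ} (x : Fin d → ℝ) :
    l2 x = ‖(WithLp.equiv 2 (Fin d → ℝ)).symm x‖ := by
  rw [EuclideanSpace.norm_eq]
  simp [l2, sq_abs]

lemma abs_apply_le_norm {d : ℕ} (x : EuclideanSpace ℝ (Fin d)) (i : Fin d) : |x i| ≤ ‖x‖ := by
  rw [EuclideanSpace.norm_eq]
  have h : ‖x i‖^2 ≤ ∑ j, ‖x j‖^2 :=
    Finset.single_le_sum (f := fun j => ‖x j‖^2) (fun j _ => by positivity) (Finset.mem_univ i)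
  calc |x i| = Real.sqrt (‖x i‖^2) := by
        rw [Real.sqrt_sq_eq_abs, Real.norm_eq_abs, abs_abs]
    _ ≤ _ := Real.sqrt_le_sqrt h

lemma l2_apply_le {d : ℕ} (x : Fin d → ℝ) (i : Fin d) : |x i| ≤ l2 x := by
  rw [l2_eq]
  exact abs_apply_le_norm ((WithLp.equiv 2 (Fin d → ℝ)).symm x) i

lemma norm_le_sqrt_mul {d : ℕ} (x : EuclideanSpace ℝ (Fin d)) (a : ℝ) (ha : 0 ≤ a)
    (h : ∀ i, |x i| ≤ a) : ‖x‖ ≤ Real.sqrt d * a := by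
  rw [EuclideanSpace.norm_eq]
  have hs : ∑ i, ‖x i‖ ^ 2 ≤ ∑ _i : Fin d, a ^ 2 := by
    apply Finset.sum_le_sum
    intro i _
    have := h i
    nlinarith [abs_nonneg (x i), Real.norm_eq_abs (x i), abs_abs (x i)]
  calc Real.sqrt (∑ i, ‖x i‖^2) ≤ Real.sqrt (d * a ^ 2) := by
        apply Real.sqrt_le_sqrt; simpa using hs
    _ = Real.sqrt d * a := by
        rw [Real.sqrt_mul (by positivity), Real.sqrt_sq ha]

lemma l2_le_sqrt_mul {d : ℕ} (x : Fin d → ℝ) (a : ℝ) (ha : 0 ≤ a)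
    (h : ∀ i, |x i| ≤ a) : l2 x ≤ Real.sqrt d * a := by
  rw [l2_eq]
  exact norm_le_sqrt_mul ((WithLp.equiv 2 (Fin d → ℝ)).symm x) a ha h

lemma l2_smul {d : ℕ} (r : ℝ) (x : Fin d → ℝ) : l2 (r • x) = |r| * l2 x := by
  rw [l2_eq, l2_eq]
  have h : (WithLp.equiv 2 (Fin d → ℝ)).symm (r • x)
      = r • (WithLp.equiv 2 (Fin d → ℝ)).symm x := rfl
  rw [h, norm_smul, Real.norm_eq_abs]

lemma l2_pos {d : ℕ} (x : Fin d → ℝ) (hx : x ≠ 0) : 0 < l2 x := by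
  rw [l2_eq]
  rw [norm_pos_iff]
  intro h
  exact hx (by exact congrArg (WithLp.equiv 2 (Fin d → ℝ)) h)

lemma normalize_sub_le {d : ℕ} (x w : EuclideanSpace ℝ (Fin d)) (hx : x ≠ 0) (hw : w ≠ 0) :
    ‖‖x‖⁻¹ • x - ‖w‖⁻¹ • w‖ ≤ 2 * ‖x - w‖ / ‖x‖ := by
  have hxn : (0:ℝ) < ‖x‖ := norm_pos_iff.mpr hx
  have hwn : (0:ℝ) < ‖w‖ := norm_pos_iff.mpr hw
  have key : ‖x‖⁻¹ • x - ‖w‖⁻¹ • w = ‖x‖⁻¹ • (x - w) + (‖x‖⁻¹ - ‖w‖⁻¹) • w := by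
    rw [smul_sub, sub_smul]; abel
  rw [key]
  have h1 : ‖‖x‖⁻¹ • (x - w)‖ = ‖x - w‖ / ‖x‖ := by
    rw [norm_smul, norm_inv, norm_norm]; ring
  have h2 : ‖(‖x‖⁻¹ - ‖w‖⁻¹) • w‖ ≤ ‖x - w‖ / ‖x‖ := by
    rw [norm_smul, Real.norm_eq_abs]
    have hdiff : ‖x‖⁻¹ - ‖w‖⁻¹ = (‖w‖ - ‖x‖) / (‖x‖ * ‖w‖) := by
      field_simp
    rw [hdiff, abs_div, abs_of_pos (mul_pos hxn hwn)]
    have hle : |‖w‖ - ‖x‖| ≤ ‖x - w‖ := by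
      rw [norm_sub_rev]; exact abs_norm_sub_norm_le w x
    calc |‖w‖ - ‖x‖| / (‖x‖ * ‖w‖) * ‖w‖ = |‖w‖ - ‖x‖| / ‖x‖ := by
          field_simp
      _ ≤ ‖x - w‖ / ‖x‖ := by gcongr
  calc _ ≤ ‖‖x‖⁻¹ • (x - w)‖ + ‖(‖x‖⁻¹ - ‖w‖⁻¹) • w‖ := norm_add_le _ _
    _ ≤ ‖x - w‖ / ‖x‖ + ‖x - w‖ / ‖x‖ := by rw [h1]; exact add_le_add_right h2 _
    _ = 2 * ‖x - w‖ / ‖x‖ := by ring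

lemma l2_normalize_sub_le {d : ℕ} (x w : Fin d → ℝ) (hx : x ≠ 0) (hw : w ≠ 0) :
    l2 ((l2 x)⁻¹ • x - (l2 w)⁻¹ • w) ≤ 2 * l2 (x - w) / l2 x := by
  have hx' : (WithLp.equiv 2 (Fin d → ℝ)).symm x ≠ 0 := by
    intro h; exact hx (congrArg (WithLp.equiv 2 (Fin d → ℝ)) h)
  have hw' : (WithLp.equiv 2 (Fin d → ℝ)).symm w ≠ 0 := by
    intro h; exact hw (congrArg (WithLp.equiv 2 (Fin d → ℝ)) h)
  have := normalize_sub_le ((WithLp.equiv 2 (Fin d → ℝ)).symm x)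
    ((WithLp.equiv 2 (Fin d → ℝ)).symm w) hx' hw'
  rw [l2_eq, l2_eq, l2_eq, l2_eq]
  exact this

def ivec {m : ℕ} (N : ℕ) (p : Fin (m+1) × Bool × (Fin m → ℤ)) : Fin (m+1) → ℤ :=
  p.1.insertNth (if p.2.1 then (N:ℤ) else -(N:ℤ)) p.2.2

noncomputable def fvec {m : ℕ} (N : ℕ) (p : Fin (m+1) × Bool × (Fin m → ℤ)) :
    Fin (m+1) → ℝ :=
  (l2 (fun i => (ivec N p i : ℝ)))⁻¹ • fun i => (ivec N p i : ℝ)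

lemma l2_nonneg {d : ℕ} (x : Fin d → ℝ) : 0 ≤ l2 x := Real.sqrt_nonneg _

set_option maxHeartbeats 2000000 in
/-- Lemma 3.8: one can choose about `s^{d-1}` rays from the origin so that every unit lattice
cube contained in `sB` is intersected by one of the rays. -/
theorem rays_cover_cubes (d : ℕ) (hd : 2 ≤ d) (B : Set (Fin d → ℝ))
    (hBcompact : IsCompact B) (hBconvex : Convex ℝ B) (hB0 : (0 : Fin d → ℝ) ∈ interior B) :
    ∃ C : ℝ, 0 < C ∧ ∀ s : ℝ, 1 < s →
      ∃ F : Finset (Fin d → ℝ),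
        (∀ v ∈ F, l2 v = 1) ∧
        (F.card : ℝ) ≤ C * s ^ (d - 1) ∧
        ∀ y : V d,
          {x : Fin d → ℝ | ∀ i, (y i : ℝ) ≤ x i ∧ x i < (y i : ℝ) + 1} ⊆ s • B →
          ∃ v ∈ F, ∃ τ : ℝ, 0 ≤ τ ∧ ∀ i, (y i : ℝ) ≤ τ * v i ∧ τ * v i < (y i : ℝ) + 1 := by
  obtain ⟨m, rfl⟩ : ∃ m, d = m + 1 := ⟨d - 1, by omega⟩
  -- bound on B
  obtain ⟨R0, hR0⟩ := (hBcompact.isBounded).exists_norm_le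
  set R : ℝ := max R0 1 with hR
  have hR1 : (1:ℝ) ≤ R := le_max_right _ _
  set sd : ℝ := Real.sqrt ((m + 1 : ℕ) : ℝ) with hsd
  have hsd1 : (1:ℝ) ≤ sd := by
    rw [hsd]
    rw [show (1:ℝ) = Real.sqrt 1 by simp]
    apply Real.sqrt_le_sqrt
    push_cast; linarith
  set D : ℝ := sd * R with hD
  have hD1 : (1:ℝ) ≤ D := by nlinarith
  have hBD : ∀ b ∈ B, l2 b ≤ D := by
    intro b hb
    rw [hD, hsd]
    apply l2_le_sqrt_mul b R (by linarith)
    intro i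
    calc |b i| = ‖b i‖ := (Real.norm_eq_abs _).symm
      _ ≤ ‖b‖ := norm_le_pi_norm b i
      _ ≤ R0 := hR0 b hb
      _ ≤ R := le_max_left _ _
  set K : ℝ := 4 * sd * D + 5 with hK
  refine ⟨2 * (m + 1) * K ^ m, by positivity, ?_⟩
  intro s hs
  set N : ℕ := ⌊2 * sd * D * s⌋₊ + 1 with hN
  have hNgt : 2 * sd * D * s < (N : ℝ) := by
    rw [hN]; push_cast; exact Nat.lt_floor_add_one _
  have hN1 : (1:ℝ) ≤ (N:ℝ) := by exact_mod_cast Nat.one_le_iff_ne_zero.mpr (by omega)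
  clear_value N
  -- the index set and the map
  set S : Finset (Fin (m+1) × Bool × (Fin m → ℤ)) :=
    Finset.univ ×ˢ Finset.univ ×ˢ Fintype.piFinset (fun _ => Finset.Icc (-(N:ℤ)) (N:ℤ)) with hS
  set f : (Fin (m+1) × Bool × (Fin m → ℤ)) → (Fin (m+1) → ℝ) := fvec N with hf
  refine ⟨S.image f, ?_, ?_, ?_⟩
  · -- unit vectors
    intro v hv
    obtain ⟨p, _, rfl⟩ := Finset.mem_image.mp hv
    set x : Fin (m+1) → ℝ := fun i => (ivec N p i : ℝ) with hx
    have hxj : |x p.1| = (N:ℝ) := by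
      rw [hx]
      simp only [ivec, Fin.insertNth_apply_same]
      rcases p.2.1 with _|_ <;> simp
    have hlx : 0 < l2 x := by
      have := l2_apply_le x p.1
      have : (N:ℝ) ≤ l2 x := hxj ▸ this
      linarith
    show l2 (fvec N p) = 1
    have hfv : fvec N p = (l2 x)⁻¹ • x := rfl
    rw [hfv]
    rw [l2_smul, abs_of_pos (inv_pos.mpr hlx), inv_mul_cancel₀ hlx.ne']
  · -- cardinality
    have hcard : (S.image f).card ≤ (m + 1) * (2 * (2 * N + 1) ^ m) := by
      refine (Finset.card_image_le).trans ?_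
      rw [hS]
      rw [Finset.card_product, Finset.card_product, Fintype.card_piFinset]
      simp only [Finset.card_univ, Fintype.card_fin, Fintype.card_bool]
      have : (Finset.Icc (-(N:ℤ)) (N:ℤ)).card = 2 * N + 1 := by
        rw [Int.card_Icc]
        omega
      simp [this]
    have h2N : (2 * N + 1 : ℝ) ≤ K * s := by
      have hfl : ((⌊2 * sd * D * s⌋₊ : ℕ) : ℝ) ≤ 2 * sd * D * s :=
        Nat.floor_le (by positivity)
    -- N ≤ 2 sd D s + 1
      have hNle : (N : ℝ) ≤ 2 * sd * D * s + 1 := by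
        rw [hN]; push_cast; linarith
      have hs1 : (1:ℝ) ≤ s := hs.le
      rw [hK]
      nlinarith
    calc ((S.image f).card : ℝ) ≤ ((m + 1) * (2 * (2 * N + 1) ^ m) : ℕ) := by
          exact_mod_cast hcard
      _ = 2 * (m + 1) * ((2 * N + 1 : ℝ)) ^ m := by push_cast; ring
      _ ≤ 2 * (m + 1) * (K * s) ^ m := by gcongr
      _ = 2 * (m + 1) * K ^ m * s ^ m := by rw [mul_pow]; ring
      _ = 2 * (m + 1) * K ^ m * s ^ (m + 1 - 1) := by norm_num
  · -- covering
    intro y hsub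
    set c : Fin (m+1) → ℝ := fun i => (y i : ℝ) + 1/2 with hc
    have hc_mem : c ∈ s • B := by
      apply hsub
      intro i
      constructor
      · rw [hc]; norm_num
      · rw [hc]; norm_num
    have hcD : l2 c ≤ s * D := by
      obtain ⟨b, hb, hbc⟩ := hc_mem
      have hbc' : s • b = c := hbc
      rw [← hbc', l2_smul, abs_of_pos (show (0:ℝ) < s by linarith)]
      have := hBD b hb
      nlinarith
    have hc0 : c ≠ 0 := by
      intro h
      have h0 : (y 0 : ℝ) + 1/2 = 0 := congrFun h 0
      have : ((2 * y 0 + 1 : ℤ) : ℝ) = 0 := by push_cast; linarith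
      have : (2 * y 0 + 1 : ℤ) = 0 := by exact_mod_cast this
      omega
    obtain ⟨j, -, hj⟩ := Finset.exists_max_image Finset.univ (fun i => |c i|)
      ⟨0, Finset.mem_univ 0⟩
    have hlc : 0 < l2 c := l2_pos c hc0
    have hcj : 0 < |c j| := by
      by_contra h
      push_neg at h
      have : ∀ i, |c i| ≤ 0 := fun i => (hj i (Finset.mem_univ i)).trans h
      have hle := l2_le_sqrt_mul c 0 le_rfl (by simpa using this)
      rw [mul_zero] at hle
      linarith
    set t : ℝ := (N : ℝ) / |c j| with ht
    have ht0 : 0 < t := by positivity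
    set w : Fin (m+1) → ℝ := t • c with hw
    have hwj : |w j| = N := by
      rw [hw]
      show |t * c j| = N
      rw [abs_mul, abs_of_pos ht0, ht]
      field_simp
    have hwile : ∀ i, |w i| ≤ N := by
      intro i
      show |t * c i| ≤ N
      rw [abs_mul, abs_of_pos ht0, ht]
      rw [div_mul_eq_mul_div, div_le_iff₀ hcj]
      have := hj i (Finset.mem_univ i)
      nlinarith
    set σ : Bool := decide (0 ≤ c j) with hσ
    set a : ℤ := if σ then (N:ℤ) else -(N:ℤ) with ha
    have hwa : w j = (a : ℝ) := by
      rw [ha, hσ]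
      rcases le_or_gt 0 (c j) with h | h
      · simp only [decide_eq_true h, if_true]
        have : |c j| = c j := abs_of_nonneg h
        show t * c j = (N:ℝ)
        rw [ht, ← this]
        field_simp; rw [abs_abs]
      · have hdec : decide (0 ≤ c j) = false := decide_eq_false (not_le.mpr h)
        simp only [hdec, if_false]
        have habs : |c j| = -c j := abs_of_neg h
        have hcast : ((-(N:ℤ) : ℤ) : ℝ) = -(N:ℝ) := by push_cast; ring
        show t * c j = ((-(N:ℤ) : ℤ) : ℝ)
        rw [hcast, ht, habs]
        have hcj' : c j ≠ 0 := h.ne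
        rw [div_neg, neg_mul, div_mul_cancel₀ _ hcj']
    set g : Fin m → ℤ := fun k => round (w (j.succAbove k)) with hg
    set x : Fin (m+1) → ℝ := fun i => (ivec N (j, σ, g) i : ℝ) with hx
    have hiv : ivec N (j, σ, g) = j.insertNth a g := rfl
    have hxj : x j = (a:ℝ) := by rw [hx, hiv]; simp [Fin.insertNth_apply_same]
    have hxja : |x j| = N := by
      rw [hxj, ha]
      rcases σ with _|_ <;> simp
    have hxw : ∀ i, |x i - w i| ≤ 1/2 := by
      intro i
      rcases eq_or_ne i j with rfl | hne
      · rw [hxj, hwa]; simp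
      · obtain ⟨k, rfl⟩ := Fin.exists_succAbove_eq hne
        have : x (j.succAbove k) = (round (w (j.succAbove k)) : ℝ) := by
          rw [hx, hiv]; simp [Fin.insertNth_apply_succAbove, hg]
        rw [this, abs_sub_comm]
        exact abs_sub_round _
    have hxwl2 : l2 (x - w) ≤ sd * (1/2) := by
      rw [hsd]
      apply l2_le_sqrt_mul _ _ (by norm_num)
      intro i
      exact hxw i
    have hlx : (N:ℝ) ≤ l2 x := hxja ▸ l2_apply_le x j
    have hx0 : x ≠ 0 := by
      intro h
      have := hxja
      rw [h] at this
      simp at this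
      linarith
    have hw0 : w ≠ 0 := by
      intro h
      have := hwj
      rw [h] at this
      simp at this
      linarith
    refine ⟨f (j, σ, g), Finset.mem_image.mpr ⟨(j, σ, g), ?_, rfl⟩, l2 c, hlc.le, ?_⟩
    · -- membership in S
      rw [hS]
      refine Finset.mem_product.mpr ⟨Finset.mem_univ _, Finset.mem_product.mpr
        ⟨Finset.mem_univ _, ?_⟩⟩
      rw [Fintype.mem_piFinset]
      intro k
      rw [Finset.mem_Icc]
      have h1 : |w (j.succAbove k)| ≤ N := hwile _
      have h2 : |w (j.succAbove k) - (round (w (j.succAbove k)) : ℝ)| ≤ 1/2 :=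
        abs_sub_round _
      have h3 : |(g k : ℝ)| ≤ (N:ℝ) + 1/2 := by
        rw [hg]
        calc |(round (w (j.succAbove k)) : ℝ)|
            ≤ |w (j.succAbove k)| + 1/2 := by
              have := abs_sub_abs_le_abs_sub ((round (w (j.succAbove k)) : ℝ))
                (w (j.succAbove k))
              rw [abs_sub_comm] at h2
              linarith
          _ ≤ (N:ℝ) + 1/2 := by linarith
      have h4 : |g k| ≤ (N:ℤ) := by
        have h5 : ((|g k| : ℤ) : ℝ) < ((N:ℤ):ℝ) + 1 := by
          push_cast
          calc |(g k : ℝ)| ≤ (N:ℝ) + 1/2 := by exact_mod_cast h3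
            _ < (N:ℝ) + 1 := by linarith
        have h6 : (|g k| : ℤ) < (N:ℤ) + 1 := by exact_mod_cast h5
        omega
      show -(N:ℤ) ≤ g k ∧ g k ≤ (N:ℤ)
      exact abs_le.mp h4
    · -- the final estimate
      have hfx : f (j, σ, g) = (l2 x)⁻¹ • x := rfl
      rw [hfx]
      set v : Fin (m+1) → ℝ := (l2 x)⁻¹ • x with hv
      set u : Fin (m+1) → ℝ := (l2 c)⁻¹ • c with hu
      have hwu : (l2 w)⁻¹ • w = u := by
        rw [hw, l2_smul, abs_of_pos ht0, hu, mul_inv, smul_smul]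
        congr 1
        have htne : t ≠ 0 := ht0.ne'
        calc t⁻¹ * (l2 c)⁻¹ * t = (l2 c)⁻¹ * (t⁻¹ * t) := by ring
          _ = (l2 c)⁻¹ := by rw [inv_mul_cancel₀ htne, mul_one]
      have hvu : l2 (v - u) ≤ sd / N := by
        have h := l2_normalize_sub_le x w hx0 hw0
        rw [hwu] at h
        calc l2 (v - u) ≤ 2 * l2 (x - w) / l2 x := h
          _ ≤ 2 * (sd * (1/2)) / (N:ℝ) := by
              gcongr <;> linarith
          _ = sd / N := by ring
      have hcu : c = (l2 c) • u := by
        rw [hu, smul_smul, mul_inv_cancel₀ hlc.ne', one_smul]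
      have hkey : ∀ i, |l2 c * v i - c i| < 1/2 := by
        intro i
        have hvec : l2 ((l2 c) • v - c) < 1/2 := by
          have heq : (l2 c) • v - c = (l2 c) • (v - u) := by
            rw [smul_sub, ← hcu]
          rw [heq, l2_smul, abs_of_pos hlc]
          have hD0 : 0 < D := by linarith
          have hsd0 : 0 < sd := by linarith
          have hN0 : (0:ℝ) < N := by linarith
          calc l2 c * l2 (v - u) ≤ (s * D) * (sd / N) :=
                mul_le_mul hcD hvu (l2_nonneg _) (by positivity)
            _ = (s * D * sd) / N := by ring
            _ < 1/2 := by
                rw [div_lt_iff₀ hN0]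
                nlinarith
        have hco : |((l2 c) • v - c) i| ≤ l2 ((l2 c) • v - c) := l2_apply_le _ i
        have : ((l2 c) • v - c) i = l2 c * v i - c i := rfl
        rw [this] at hco
        linarith
      intro i
      have h := hkey i
      have hci : c i = (y i : ℝ) + 1/2 := rfl
      rw [hci] at h
      rw [abs_lt] at h
      constructor <;> linarith


end FPPBoundary
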